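/- Define 𝒜(D) = 1 / (Σ_{x ∈ D} x) for a finite set D ⊆ ℝ. There exist constants C > 0 and N₀ such that for every even n ≥ N₀ there exists a dataset 𝒟 ⊆ ℝ with |𝒟| = n for which, with 𝔻 the collection of size-(n/2) subsets of 𝒟: (i) the variance of 𝒜(D) over D drawn uniformly from 𝔻 is at most C, and (ii) there exist adjacent D, D' ∈ 𝔻 with |𝒜(D) − 𝒜(D')| ≥ 2^{n/3}. In other words, the variance σ² of 𝒜 over random half-size subsets is O(1) while its sensitivity Δ = max_{D ∼ D' ∈ 𝔻} |𝒜(D) − 𝒜(D')| is Ω(2^{n/3}). -/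

import Mathlib

set_option maxHeartbeats 1000000

lemma var_le_moment {ι : Type*} (s : Finset ι) (a : ι → ℝ) :
    ((s.card : ℝ))⁻¹ * ∑ D ∈ s, (a D - (s.card : ℝ)⁻¹ * ∑ D' ∈ s, a D') ^ 2
      ≤ (s.card : ℝ)⁻¹ * ∑ D ∈ s, (a D) ^ 2 := by
  rcases Nat.eq_zero_or_pos s.card with h | h
  · rw [Finset.card_eq_zero] at h
    subst h; simp
  · have hM : (0 : ℝ) < (s.card : ℝ) := by exact_mod_cast h
    set M : ℝ := (s.card : ℝ) with hMdef
    set μ : ℝ := M⁻¹ * ∑ D' ∈ s, a D' with hμ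
    have hsum : ∑ D ∈ s, a D = M * μ := by
      rw [hμ]; field_simp
    have expand : ∑ D ∈ s, (a D - μ) ^ 2
        = (∑ D ∈ s, (a D) ^ 2) - M * μ ^ 2 := by
      have : ∀ D ∈ s, (a D - μ) ^ 2 = (a D) ^ 2 - 2 * μ * a D + μ ^ 2 := by
        intro D _; ring
      rw [Finset.sum_congr rfl this, Finset.sum_add_distrib, Finset.sum_sub_distrib,
        ← Finset.mul_sum, Finset.sum_const, hsum, nsmul_eq_mul, ← hMdef]
      ring
    rw [expand, mul_sub]
    have h1 : M⁻¹ * (M * μ ^ 2) = μ ^ 2 := by field_simp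
    rw [h1]
    nlinarith [sq_nonneg μ]



/-- with `𝒜(D) = 1/(∑_{x ∈ D} x)`, there are constants `C > 0`
and `N₀` such that for every even `n ≥ N₀` there is a dataset `𝒟 ⊆ ℝ` of size
`n` for which, over the collection `𝔻` of size-`(n/2)` subsets of `𝒟`: (i) the
variance of `𝒜(D)` for `D` uniform on `𝔻` is at most `C`, and (ii) there exist
adjacent `D, D' ∈ 𝔻` with `|𝒜(D) - 𝒜(D')| ≥ 2^{n/3}`. So the variance is
`O(1)` while the sensitivity is `Ω(2^{n/3})`. -/
theorem statement_14 :
    ∃ C : ℝ, 0 < C ∧ ∃ N₀ : ℕ, ∀ n : ℕ, N₀ ≤ n → Even n →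
      ∃ 𝒟 : Finset ℝ, 𝒟.card = n ∧
        -- (i) variance of 𝒜 over uniform D ∈ 𝔻 is at most C
        (((𝒟.powersetCard (n / 2)).card : ℝ)⁻¹ *
            ∑ D ∈ 𝒟.powersetCard (n / 2),
              ((∑ x ∈ D, x)⁻¹ -
                  ((𝒟.powersetCard (n / 2)).card : ℝ)⁻¹ *
                    ∑ D' ∈ 𝒟.powersetCard (n / 2), (∑ x ∈ D', x)⁻¹) ^ 2
          ≤ C) ∧
        -- (ii) an adjacent pair witnessing sensitivity at least 2^{n/3}
        (∃ D ∈ 𝒟.powersetCard (n / 2), ∃ D' ∈ 𝒟.powersetCard (n / 2),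
          (D ∩ D').card = n / 2 - 1 ∧
          (2 : ℝ) ^ ((n : ℝ) / 3) ≤ |(∑ x ∈ D, x)⁻¹ - (∑ x ∈ D', x)⁻¹|) := by
  refine ⟨5, by norm_num, 100, fun n hn heven => ?_⟩
  obtain ⟨m, hmm⟩ := heven
  have hm2 : n = 2 * m := by omega
  have hn2 : n / 2 = m := by omega
  have hm50 : 50 ≤ m := by omega
  rw [hn2]
  -- the injective map i ↦ 4^i
  set f : ℕ → ℝ := fun i => (4 : ℝ) ^ i with hf
  have hfinj : Function.Injective f := by
    intro a b hab
    exact (pow_right_strictMono₀ (by norm_num : (1:ℝ) < 4)).injective hab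
  have hf4 : ∀ i, 1 ≤ i → (4 : ℝ) ≤ f i := by
    intro i hi
    calc (4:ℝ) = 4 ^ 1 := by norm_num
    _ ≤ 4 ^ i := by exact pow_le_pow_right₀ (by norm_num) hi
  have hfpos : ∀ i, (0:ℝ) < f i := fun i => by positivity
  -- the big value A and small value ε
  set A : ℝ := (2 : ℝ) ^ ((n : ℝ) / 3) + 2 with hA
  have hB1 : (2:ℝ) ≤ (2 : ℝ) ^ ((n : ℝ) / 3) := by
    have : (2:ℝ) ^ (1:ℝ) ≤ (2 : ℝ) ^ ((n : ℝ) / 3) := by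
      apply Real.rpow_le_rpow_of_exponent_le (by norm_num)
      have : (100:ℝ) ≤ (n:ℝ) := by exact_mod_cast hn
      linarith
    simpa using this
  have hA3 : (4:ℝ) ≤ A := by rw [hA]; linarith
  have hApos : (0:ℝ) < A := by linarith
  set ε : ℝ := A⁻¹ with hε
  have hεpos : 0 < ε := by positivity
  have hεle : ε ≤ 1/4 := by
    rw [hε]
    rw [show (1:ℝ)/4 = 4⁻¹ by norm_num]
    exact inv_anti₀ (by norm_num) hA3
  -- index sets
  set S : Finset ℕ := Finset.Icc 1 (m - 1) with hS
  set a0 : ℝ := ε - ∑ i ∈ S, f i with ha0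
  set P : Finset ℝ := (Finset.Icc 1 (n - 1)).image f with hP
  have hSsub : S ⊆ Finset.Icc 1 (n - 1) := by
    apply Finset.Icc_subset_Icc le_rfl; omega
  have hScard : S.card = m - 1 := by rw [hS, Nat.card_Icc]; omega
  have hSsum_ge : (4:ℝ) ≤ ∑ i ∈ S, f i := by
    have h1 : (1:ℕ) ∈ S := by rw [hS]; simp; omega
    calc (4:ℝ) ≤ f 1 := hf4 1 le_rfl
    _ ≤ ∑ i ∈ S, f i := Finset.single_le_sum (fun i _ => (hfpos i).le) h1
  have hSsum_le : ∑ i ∈ S, f i ≤ (4:ℝ) ^ m / 3 := by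
    have hIco : S = Finset.Ico 1 m := by
      rw [hS]; ext i; simp only [Finset.mem_Icc, Finset.mem_Ico]; omega
    have : ∑ i ∈ S, f i ≤ ∑ i ∈ Finset.range m, f i := by
      apply Finset.sum_le_sum_of_subset_of_nonneg
      · rw [hIco, Finset.range_eq_Ico]; exact Finset.Ico_subset_Ico (by omega) le_rfl
      · intro i _ _; exact (hfpos i).le
    have hgeom : ∑ i ∈ Finset.range m, f i = ((4:ℝ) ^ m - 1) / 3 := by
      rw [hf]
      rw [geom_sum_eq (by norm_num : (4:ℝ) ≠ 1)]
      norm_num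
    rw [hgeom] at this
    linarith
  have ha0neg : a0 < 0 := by rw [ha0]; linarith
  have hPpos : ∀ x ∈ P, (4:ℝ) ≤ x := by
    intro x hx
    rw [hP, Finset.mem_image] at hx
    obtain ⟨i, hi, rfl⟩ := hx
    rw [Finset.mem_Icc] at hi
    exact hf4 i hi.1
  have ha0P : a0 ∉ P := fun h => by linarith [hPpos a0 h]
  set 𝒟 : Finset ℝ := insert a0 P with h𝒟
  have hPcard : P.card = n - 1 := by
    rw [hP, Finset.card_image_of_injective _ hfinj, Nat.card_Icc]; omega
  have h𝒟card : 𝒟.card = n := by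
    rw [h𝒟, Finset.card_insert_of_notMem ha0P, hPcard]; omega
  -- D₀
  set D0 : Finset ℝ := insert a0 (S.image f) with hD0
  have ha0S : a0 ∉ S.image f := by
    intro h
    apply ha0P
    rw [hP]; exact Finset.image_subset_image hSsub h
  have hD0card : D0.card = m := by
    rw [hD0, Finset.card_insert_of_notMem ha0S,
      Finset.card_image_of_injective _ hfinj, hScard]; omega
  have hD0sub : D0 ⊆ 𝒟 := by
    rw [hD0, h𝒟]
    exact Finset.insert_subset_insert _ (by rw [hP]; exact Finset.image_subset_image hSsub)
  have hD0mem : D0 ∈ 𝒟.powersetCard m := by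
    rw [Finset.mem_powersetCard]; exact ⟨hD0sub, hD0card⟩
  have hD0sum : ∑ x ∈ D0, x = ε := by
    rw [hD0, Finset.sum_insert ha0S, Finset.sum_image (fun a _ b _ h => hfinj h), ha0]
    ring
  -- D'
  set D1 : Finset ℝ := insert (f m) (D0.erase (f (m-1))) with hD1
  have hfmD0 : f m ∉ D0 := by
    rw [hD0, Finset.mem_insert]
    rintro (h | h)
    · have : a0 < f m := lt_trans ha0neg (hfpos m)
      exact absurd h this.ne'
    · rw [Finset.mem_image] at h
      obtain ⟨i, hi, hie⟩ := h
      rw [hS, Finset.mem_Icc] at hi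
      have := hfinj hie
      omega
  have hfm1D0 : f (m-1) ∈ D0 := by
    rw [hD0]
    apply Finset.mem_insert_of_mem
    exact Finset.mem_image_of_mem f (by rw [hS, Finset.mem_Icc]; omega)
  have hD1card : D1.card = m := by
    rw [hD1, Finset.card_insert_of_notMem (fun h => hfmD0 (Finset.erase_subset _ _ h)),
      Finset.card_erase_of_mem hfm1D0, hD0card]
    omega
  have hD1sub : D1 ⊆ 𝒟 := by
    rw [hD1]
    apply Finset.insert_subset
    · rw [h𝒟, hP]
      apply Finset.mem_insert_of_mem
      exact Finset.mem_image_of_mem f (by rw [Finset.mem_Icc]; omega)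
    · exact (Finset.erase_subset _ _).trans hD0sub
  have hD1mem : D1 ∈ 𝒟.powersetCard m := by
    rw [Finset.mem_powersetCard]; exact ⟨hD1sub, hD1card⟩
  have hD1sum : ∑ x ∈ D1, x = ε + ((4:ℝ) ^ m - 4 ^ (m-1)) := by
    rw [hD1, Finset.sum_insert (fun h => hfmD0 (Finset.erase_subset _ _ h)),
      Finset.sum_erase_eq_sub hfm1D0, hD0sum]
    rw [hf]
    ring
  have hinter : (D0 ∩ D1).card = m - 1 := by
    have : D0 ∩ D1 = D0.erase (f (m-1)) := by
      rw [hD1, Finset.inter_insert_of_notMem hfmD0]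
      exact Finset.inter_eq_right.mpr (Finset.erase_subset _ _)
    rw [this, Finset.card_erase_of_mem hfm1D0, hD0card]
  -- key sum lower bound for other subsets
  have hkey : ∀ D ∈ 𝒟.powersetCard m, D ≠ D0 → (2:ℝ) ≤ ∑ x ∈ D, x := by
    intro D hD hne
    rw [Finset.mem_powersetCard] at hD
    obtain ⟨hDsub, hDcard⟩ := hD
    by_cases ha0D : a0 ∈ D
    · -- D contains a0
      have hEsub : D.erase a0 ⊆ P := by
        intro x hx
        have hx' := Finset.mem_of_mem_erase hx
        rcases Finset.mem_insert.mp (hDsub hx') with h | h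
        · exact absurd h (Finset.ne_of_mem_erase hx)
        · exact h
      rw [hP] at hEsub
      obtain ⟨T, hTsub, hTim⟩ := Finset.subset_image_iff.mp hEsub
      have hTcard : T.card = m - 1 := by
        have := congrArg Finset.card hTim
        rwa [Finset.card_image_of_injective _ hfinj, Finset.card_erase_of_mem ha0D,
          hDcard] at this
      have hTS : T ≠ S := by
        intro h
        apply hne
        rw [← Finset.insert_erase ha0D, ← hTim, h, hD0]
      have hDsum : ∑ x ∈ D, x = a0 + ∑ i ∈ T, f i := by
        rw [← Finset.insert_erase ha0D, Finset.sum_insert (Finset.notMem_erase _ _),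
          ← hTim, Finset.sum_image (fun a _ b _ h => hfinj h)]
      obtain ⟨j, hjT, hjS⟩ : ∃ j ∈ T, j ∉ S := by
        by_contra h
        push_neg at h
        exact hTS (Finset.eq_of_subset_of_card_le h (by omega))
      have hjm : m ≤ j := by
        have h1 := Finset.mem_Icc.mp (hTsub hjT)
        rw [hS, Finset.mem_Icc] at hjS
        omega
      have hTge : (4:ℝ) ^ m ≤ ∑ i ∈ T, f i := by
        calc (4:ℝ) ^ m ≤ (4:ℝ) ^ j := pow_le_pow_right₀ (by norm_num) hjm
        _ = f j := rfl
        _ ≤ ∑ i ∈ T, f i := Finset.single_le_sum (fun i _ => (hfpos i).le) hjT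
      have h4m : (4:ℝ) ≤ (4:ℝ) ^ m := by
        calc (4:ℝ) = 4 ^ 1 := by norm_num
        _ ≤ (4:ℝ) ^ m := pow_le_pow_right₀ (by norm_num) (by omega)
      rw [hDsum, ha0]
      linarith
    · -- D ⊆ P
      have hDP : D ⊆ P := by
        intro x hx
        rcases Finset.mem_insert.mp (hDsub hx) with h | h
        · exact absurd (h ▸ hx) ha0D
        · exact h
      have : (4:ℝ) * m ≤ ∑ x ∈ D, x := by
        have := Finset.sum_le_sum (fun x hx => hPpos x (hDP hx))
        rw [Finset.sum_const, hDcard, nsmul_eq_mul] at this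
        linarith
      have : (1:ℝ) ≤ (m:ℝ) := by exact_mod_cast Nat.one_le_iff_ne_zero.mpr (by omega)
      linarith
  refine ⟨𝒟, h𝒟card, ?_, D0, hD0mem, D1, hD1mem, hinter, ?_⟩
  · -- variance bound
    set 𝔻 := 𝒟.powersetCard m with h𝔻
    set M : ℝ := (𝔻.card : ℝ) with hM
    set k := n / 3 with hk
    have hk33 : 33 ≤ k := by omega
    have hMnat : 𝔻.card = Nat.centralBinom m := by
      rw [h𝔻, Finset.card_powersetCard, h𝒟card, Nat.centralBinom_eq_two_mul_choose, ← hm2]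
    have h1 : 4 ^ m < m * Nat.centralBinom m :=
      Nat.four_pow_lt_mul_centralBinom m (by omega)
    have hm2pow : m ≤ 2 ^ (2 * m - (2 * k + 4)) := by
      have e1 : k - 10 < 2 ^ (k - 10) := Nat.lt_two_pow_self
      have e2 : m ≤ 32 * (k - 10) := by omega
      calc m ≤ 32 * (k - 10) := e2
      _ ≤ 32 * 2 ^ (k - 10) := Nat.mul_le_mul_left 32 e1.le
      _ = 2 ^ 5 * 2 ^ (k - 10) := by norm_num
      _ = 2 ^ (5 + (k - 10)) := (pow_add 2 5 (k - 10)).symm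
      _ ≤ 2 ^ (2 * m - (2 * k + 4)) := Nat.pow_le_pow_right (by norm_num) (by omega)
    have h2 : m * 2 ^ (2 * k + 4) ≤ 4 ^ m := by
      calc m * 2 ^ (2 * k + 4) ≤ 2 ^ (2 * m - (2 * k + 4)) * 2 ^ (2 * k + 4) :=
            Nat.mul_le_mul_right _ hm2pow
      _ = 2 ^ (2 * m) := by rw [← pow_add]; congr 1; omega
      _ = 4 ^ m := by rw [show (4:ℕ) = 2 ^ 2 by norm_num, ← pow_mul]
    have h3 : 2 ^ (2 * k + 4) < Nat.centralBinom m :=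
      Nat.lt_of_mul_lt_mul_left (lt_of_le_of_lt h2 h1)
    -- real bound A² ≤ M
    have hBk : (2:ℝ) ^ ((n:ℝ) / 3) ≤ (2:ℝ) ^ (k + 1) := by
      have hcast : (n:ℝ) / 3 ≤ ((k + 1 : ℕ) : ℝ) := by
        have : (n:ℝ) ≤ 3 * ((k:ℝ) + 1) := by
          have : n ≤ 3 * k + 3 := by omega
          exact_mod_cast this
        push_cast
        linarith
      have := Real.rpow_le_rpow_of_exponent_le (by norm_num : (1:ℝ) ≤ 2) hcast
      rwa [Real.rpow_natCast] at this
    have h2k : (2:ℝ) ≤ (2:ℝ) ^ (k + 1) := by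
      calc (2:ℝ) = 2 ^ 1 := by norm_num
      _ ≤ (2:ℝ) ^ (k + 1) := pow_le_pow_right₀ (by norm_num) (by omega)
    have hAle : A ≤ (2:ℝ) ^ (k + 2) := by
      have : (2:ℝ) ^ (k + 2) = 2 ^ (k + 1) + 2 ^ (k + 1) := by ring
      rw [hA, this]
      linarith
    have hA2 : A ^ 2 ≤ (2:ℝ) ^ (2 * k + 4) := by
      calc A ^ 2 ≤ ((2:ℝ) ^ (k + 2)) ^ 2 := by
            apply pow_le_pow_left₀ hApos.le hAle
      _ = (2:ℝ) ^ (2 * k + 4) := by rw [← pow_mul]; congr 1; omega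
    have hA2M : A ^ 2 ≤ M := by
      have : ((2:ℝ)) ^ (2 * k + 4) ≤ M := by
        rw [hM, hMnat]
        exact_mod_cast h3.le
      linarith
    have hMpos : (0:ℝ) < M := by nlinarith
    -- the second moment bound
    have haD0 : (∑ x ∈ D0, x)⁻¹ = A := by rw [hD0sum, hε, inv_inv]
    have hsum2 : ∑ D ∈ 𝔻, ((∑ x ∈ D, x)⁻¹) ^ 2 ≤ A ^ 2 + M := by
      rw [← Finset.add_sum_erase 𝔻 _ hD0mem, haD0]
      have hb : ∀ D ∈ 𝔻.erase D0, ((∑ x ∈ D, x)⁻¹) ^ 2 ≤ 1 := by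
        intro D hD
        have h2le := hkey D (Finset.mem_of_mem_erase hD) (Finset.ne_of_mem_erase hD)
        have hpos : (0:ℝ) < ∑ x ∈ D, x := by linarith
        have hinv : (∑ x ∈ D, x)⁻¹ ≤ 1 := by
          rw [inv_le_one_iff₀]; right; linarith
        have hinv0 : (0:ℝ) ≤ (∑ x ∈ D, x)⁻¹ := by positivity
        nlinarith
      have : ∑ D ∈ 𝔻.erase D0, ((∑ x ∈ D, x)⁻¹) ^ 2 ≤ ∑ _D ∈ 𝔻.erase D0, (1:ℝ) :=
        Finset.sum_le_sum hb
      have hcl : ∑ _D ∈ 𝔻.erase D0, (1:ℝ) ≤ M := by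
        rw [Finset.sum_const, nsmul_eq_mul, mul_one, hM]
        exact_mod_cast Finset.card_le_card (Finset.erase_subset _ _)
      linarith
    refine le_trans (var_le_moment 𝔻 (fun D => (∑ x ∈ D, x)⁻¹)) ?_
    have step : M⁻¹ * ∑ D ∈ 𝔻, ((∑ x ∈ D, x)⁻¹) ^ 2 ≤ M⁻¹ * (A ^ 2 + M) :=
      mul_le_mul_of_nonneg_left hsum2 (by positivity)
    have hfin : M⁻¹ * (A ^ 2 + M) ≤ 5 := by
      rw [mul_add, inv_mul_cancel₀ hMpos.ne']
      have : M⁻¹ * A ^ 2 ≤ M⁻¹ * M :=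
        mul_le_mul_of_nonneg_left hA2M (by positivity)
      rw [inv_mul_cancel₀ hMpos.ne'] at this
      linarith
    exact le_trans step hfin
  · -- sensitivity
    rw [hD0sum, hD1sum, hε, inv_inv]
    have h4m1 : (4:ℝ) ≤ (4:ℝ) ^ (m-1) := by
      calc (4:ℝ) = 4 ^ 1 := by norm_num
      _ ≤ (4:ℝ) ^ (m-1) := pow_le_pow_right₀ (by norm_num) (by omega)
    have h4pow : (4:ℝ) ^ m = 4 * 4 ^ (m-1) := by
      rw [← pow_succ']
      congr 1
      omega
    have hspos : (0:ℝ) < ε + ((4:ℝ) ^ m - 4 ^ (m-1)) := by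
      rw [h4pow]; nlinarith
    have hsinv : (ε + ((4:ℝ) ^ m - 4 ^ (m-1)))⁻¹ ≤ 1 := by
      rw [inv_le_one_iff₀]
      right
      rw [h4pow]; nlinarith
    have hsinvpos : (0:ℝ) < (ε + ((4:ℝ) ^ m - 4 ^ (m-1)))⁻¹ := by positivity
    have : (2:ℝ) ^ ((n:ℝ)/3) ≤ A - (ε + ((4:ℝ) ^ m - 4 ^ (m-1)))⁻¹ := by
      rw [hA]; linarith
    exact this.trans (le_abs_self _)
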